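/- Let 0 < ρ < r < min(ρ₁,...,ρ_N) and s ∈ (0,∞)^N. Then there exists a constant A > 0 such that for every f analytic on D_{ρ₁,...,ρ_N}, every α ∈ [1,∞)^N ∪ {0}, and every x ∈ D_{ρ,...,ρ}: |f(x)| ≤ A^{λ(α)} · ‖f‖_{α,r,s}, where λ(α) = α₁ + ⋯ + α_N. -/

import Mathlib

/-- Generalized binomial coefficient `binom(α+j−1, j) = (∏_{i=0}^{j−1}(α+i))/j!`. -/
noncomputable def genBinom (α : ℝ) (j : ℕ) : ℝ :=
  (∏ i ∈ Finset.range j, (α + i)) / (j.factorial : ℝ)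

/-- Taylor coefficients of an analytic function on the polydisc `D_{ρ₁,...,ρ_N}`. -/
def AnalyticCoeffs {N : ℕ} (ρ : Fin N → ℝ) (f : (Fin N → ℕ) → ℂ) : Prop :=
  ∀ r : Fin N → ℝ, (∀ d, 0 ≤ r d) → (∀ d, r d < ρ d) →
    Summable fun J : Fin N → ℕ => ‖f J‖ * ∏ d, r d ^ J d

/-- The majorization set defining the modified Nagumo norm for `α ≠ 0`. -/
def nagumoSet {N : ℕ} (f : (Fin N → ℕ) → ℂ) (α : Fin N → ℝ) (r : ℝ) (s : Fin N → ℝ) :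
    Set ℝ :=
  {A : ℝ | 0 ≤ A ∧ ∀ J : Fin N → ℕ,
    ‖f J‖ ≤ A * ∏ d, r ^ (-(α d)) * genBinom (α d) (J d) ^ s d * (r ^ J d)⁻¹}

open Classical in
/-- The modified Nagumo norm `‖f‖_{α,r,s}`. -/
noncomputable def nagumoNorm {N : ℕ} (f : (Fin N → ℕ) → ℂ) (α : Fin N → ℝ) (r : ℝ)
    (s : Fin N → ℝ) : ℝ :=
  if α = 0 then ∑' J : Fin N → ℕ, ‖f J‖ * r ^ (∑ d, J d)
  else sInf (nagumoSet f α r s)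

/-- The sum of the power series with coefficients `f` at the point `x`. -/
noncomputable def coeffEval {N : ℕ} (f : (Fin N → ℕ) → ℂ) (x : Fin N → ℂ) : ℂ :=
  ∑' J : Fin N → ℕ, f J * ∏ d, x d ^ J d

lemma genBinom_nonneg {α : ℝ} (hα : 0 ≤ α) (j : ℕ) : 0 ≤ genBinom α j := by
  apply div_nonneg _ (by positivity)
  exact Finset.prod_nonneg fun i _ => by positivity

lemma one_le_genBinom {α : ℝ} (hα : 1 ≤ α) (j : ℕ) : 1 ≤ genBinom α j := by
  rw [genBinom, le_div_iff₀ (by positivity), one_mul]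
  calc (j.factorial : ℝ) = ∏ i ∈ Finset.range j, ((i : ℝ) + 1) := by
        rw_mod_cast [Finset.prod_range_add_one_eq_factorial]
    _ ≤ ∏ i ∈ Finset.range j, (α + i) := by
        apply Finset.prod_le_prod (fun i _ => by positivity) (fun i _ => by linarith)

lemma genBinom_mono {α β : ℝ} (hα : 0 ≤ α) (hab : α ≤ β) (j : ℕ) :
    genBinom α j ≤ genBinom β j := by
  unfold genBinom
  gcongr

lemma genBinom_natCast (m j : ℕ) : genBinom ((m : ℝ) + 1) j = ((m + j).choose j : ℝ) := by
  have h : (∏ i ∈ Finset.range j, ((m : ℝ) + 1 + i)) = ((m + 1).ascFactorial j : ℕ) := by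
    induction j with
    | zero => simp
    | succ j ih => rw [Finset.prod_range_succ, ih, Nat.ascFactorial_succ]; push_cast; ring
  rw [genBinom, h, Nat.ascFactorial_eq_factorial_mul_choose]
  push_cast
  rw [mul_comm, mul_div_assoc, div_self (by positivity), mul_one]

lemma choose_hockey (m j : ℕ) :
    (m + 1 + j).choose j = ∑ k ∈ Finset.range (j + 1), (m + k).choose k := by
  have h1 : ∀ k, (m + k).choose k = (m + k).choose m := by
    intro k
    rw [← Nat.choose_symm (Nat.le_add_right m k), Nat.add_sub_cancel_left]
  have h2 : ∑ k ∈ Finset.range (j + 1), (m + k).choose k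
      = ∑ i ∈ Finset.Icc m (m + j), i.choose m := by
    rw [← Finset.Ico_add_one_right_eq_Icc, Finset.sum_Ico_eq_sum_range]
    have h3 : m + j + 1 - m = j + 1 := by omega
    rw [h3]
    exact Finset.sum_congr rfl fun k _ => h1 k
  rw [h2, Nat.sum_Icc_choose]
  have h4 : (m + 1 + j).choose j = (m + j + 1).choose (m + j + 1 - j) := by
    rw [Nat.choose_symm (by omega)]
    congr 1
    omega
  rw [h4]
  congr 1
  omega

lemma choose_mul_pow_le {θ : ℝ} (h0 : 0 ≤ θ) (h1 : θ < 1) :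
    ∀ m j : ℕ, ((m + j).choose j : ℝ) * θ ^ j * (1 - θ) ^ (m + 1) ≤ 1 := by
  intro m
  induction m with
  | zero =>
    intro j
    simp only [Nat.zero_add, Nat.choose_self, Nat.cast_one, one_mul, pow_one]
    have hθ1 : (0:ℝ) ≤ 1 - θ := by linarith
    calc θ ^ j * (1 - θ) ≤ 1 * 1 := by
          apply mul_le_mul (pow_le_one₀ h0 h1.le) (by linarith)
            (by positivity) (by norm_num)
      _ = 1 := by norm_num
  | succ m ih =>
    intro j
    have hid : ((m + 1 + j).choose j : ℝ)
        = ∑ k ∈ Finset.range (j + 1), ((m + k).choose k : ℝ) := by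
      rw_mod_cast [choose_hockey]
    rw [hid, Finset.sum_mul, Finset.sum_mul]
    have hterm : ∀ k ∈ Finset.range (j + 1),
        ((m + k).choose k : ℝ) * θ ^ j * (1 - θ) ^ (m + 1 + 1)
          ≤ θ ^ (j - k) * (1 - θ) := by
      intro k hk
      rw [Finset.mem_range] at hk
      have hjk : j = (j - k) + k := by omega
      have heq : ((m + k).choose k : ℝ) * θ ^ j * (1 - θ) ^ (m + 1 + 1)
          = (θ ^ (j - k) * (1 - θ)) * (((m + k).choose k : ℝ) * θ ^ k * (1 - θ) ^ (m + 1)) := by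
        nth_rewrite 1 [hjk]
        ring
      rw [heq]
      calc (θ ^ (j - k) * (1 - θ)) * (((m + k).choose k : ℝ) * θ ^ k * (1 - θ) ^ (m + 1))
          ≤ (θ ^ (j - k) * (1 - θ)) * 1 := by
            apply mul_le_mul_of_nonneg_left (ih k)
            have : (0:ℝ) ≤ 1 - θ := by linarith
            positivity
        _ = θ ^ (j - k) * (1 - θ) := mul_one _
    calc ∑ k ∈ Finset.range (j + 1), ((m + k).choose k : ℝ) * θ ^ j * (1 - θ) ^ (m + 1 + 1)
        ≤ ∑ k ∈ Finset.range (j + 1), θ ^ (j - k) * (1 - θ) :=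
          Finset.sum_le_sum hterm
      _ = (1 - θ) * ∑ k ∈ Finset.range (j + 1), θ ^ (j - k) := by
          rw [Finset.mul_sum]; exact Finset.sum_congr rfl fun k _ => mul_comm _ _
      _ = (1 - θ) * ∑ k ∈ Finset.range (j + 1), θ ^ k := by
          have hre := Finset.sum_range_reflect (fun k => θ ^ k) (j + 1)
          simp only [Nat.add_sub_cancel] at hre
          rw [hre]
      _ ≤ (1 - θ) * ((1 - θ)⁻¹) := by
          apply mul_le_mul_of_nonneg_left _ (by linarith)
          have h := geom_sum_Ico_le_of_lt_one h0 h1 (m := 0) (n := j + 1)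
          rw [← Finset.range_eq_Ico] at h
          simpa [one_div] using h
      _ ≤ 1 := by
          rw [mul_inv_cancel₀ (by linarith)]

lemma genBinom_mul_pow_le {α θ : ℝ} (hα : 1 ≤ α) (h0 : 0 ≤ θ) (h1 : θ < 1) (j : ℕ) :
    genBinom α j * θ ^ j ≤ (1 - θ)⁻¹ ^ (α + 1) := by
  have hθpos : (0:ℝ) < 1 - θ := by linarith
  have hinv1 : (1:ℝ) ≤ (1 - θ)⁻¹ := (one_le_inv₀ hθpos).2 (by linarith)
  have hceil : 1 ≤ ⌈α⌉₊ := Nat.one_le_ceil_iff.2 (by linarith)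
  set m : ℕ := ⌈α⌉₊ - 1 with hm
  have hmc : (m : ℝ) + 1 = (⌈α⌉₊ : ℝ) := by
    have : m + 1 = ⌈α⌉₊ := by omega
    exact_mod_cast congrArg (Nat.cast : ℕ → ℝ) this
  have hαm : α ≤ (m : ℝ) + 1 := hmc ▸ Nat.le_ceil α
  have hm1 : (m : ℝ) + 1 ≤ α + 1 := by
    rw [hmc]
    have := Nat.ceil_lt_add_one (by linarith : (0:ℝ) ≤ α)
    linarith
  calc genBinom α j * θ ^ j
      ≤ genBinom ((m : ℝ) + 1) j * θ ^ j :=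
        mul_le_mul_of_nonneg_right (genBinom_mono (by linarith) hαm j) (by positivity)
    _ = ((m + j).choose j : ℝ) * θ ^ j := by rw [genBinom_natCast]
    _ ≤ (1 - θ)⁻¹ ^ (m + 1 : ℕ) := by
        have h := choose_mul_pow_le h0 h1 m j
        rw [inv_pow, ← one_div, le_div_iff₀ (by positivity)]
        exact h
    _ = (1 - θ)⁻¹ ^ ((m + 1 : ℕ) : ℝ) := (Real.rpow_natCast _ _).symm
    _ ≤ (1 - θ)⁻¹ ^ (α + 1) := by
        apply Real.rpow_le_rpow_of_exponent_le hinv1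
        push_cast
        linarith

lemma rpow_sum_eq {x : ℝ} (hx : 0 < x) {ι : Type*} (t : Finset ι) (f : ι → ℝ) :
    x ^ (∑ d ∈ t, f d) = ∏ d ∈ t, x ^ f d := by
  induction t using Finset.cons_induction with
  | empty => simp
  | cons a u ha ih => rw [Finset.sum_cons, Finset.prod_cons, Real.rpow_add hx, ih]

lemma one_le_prod_real {ι : Type*} (t : Finset ι) (f : ι → ℝ) (h : ∀ i ∈ t, 1 ≤ f i) :
    1 ≤ ∏ i ∈ t, f i := by
  calc (1:ℝ) = ∏ _i ∈ t, (1:ℝ) := by simp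
    _ ≤ ∏ i ∈ t, f i := Finset.prod_le_prod (fun _ _ => zero_le_one) h

lemma single_le_prod_real {ι : Type*} [Fintype ι] (f : ι → ℝ) (h : ∀ i, 1 ≤ f i) (d : ι) :
    f d ≤ ∏ i, f i := by
  classical
  rw [← Finset.mul_prod_erase Finset.univ f (Finset.mem_univ d)]
  nth_rewrite 1 [← mul_one (f d)]
  apply mul_le_mul_of_nonneg_left _ (le_trans zero_le_one (h d))
  exact one_le_prod_real _ _ fun i _ => h i

/-- Let `0 < ρ < r < min(ρ₁,...,ρ_N)` and `s ∈ (0,∞)^N`.  Then there is `A > 0` such that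
for every `f` analytic on `D_{ρ₁,...,ρ_N}`, every `α ∈ [1,∞)^N ∪ {0}` and every
`x ∈ D_{ρ,...,ρ}`: `|f(x)| ≤ A^{λ(α)} · ‖f‖_{α,r,s}`, where `λ(α) = α₁ + ⋯ + α_N`. -/
theorem sup_le_nagumoNorm (N : ℕ) (Ρ : Fin N → ℝ) (hΡ : ∀ d, 0 < Ρ d)
    (ρ r : ℝ) (hρ : 0 < ρ) (hρr : ρ < r) (hrΡ : ∀ d, r < Ρ d)
    (s : Fin N → ℝ) (hs : ∀ d, 0 < s d) :
    ∃ A : ℝ, 0 < A ∧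
      ∀ f : (Fin N → ℕ) → ℂ, AnalyticCoeffs Ρ f →
      ∀ α : Fin N → ℝ, ((∀ d, 1 ≤ α d) ∨ α = 0) →
      ∀ x : Fin N → ℂ, (∀ d, ‖x d‖ < ρ) →
        ‖coeffEval f x‖ ≤ A ^ (∑ d, α d) * nagumoNorm f α r s := by
  have hr : 0 < r := hρ.trans hρr
  set t : ℝ := ρ / r with htdef
  have ht0 : 0 < t := div_pos hρ hr
  have ht1 : t < 1 := (div_lt_one hr).2 hρr
  set u : ℝ := t ^ ((1:ℝ)/2) with hudef
  have hu0 : 0 < u := Real.rpow_pos_of_pos ht0 _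
  have hu1 : u < 1 := Real.rpow_lt_one ht0.le ht1 (by norm_num)
  have huu : u * u = t := by
    rw [hudef, ← Real.rpow_add ht0]; norm_num
  set θ : Fin N → ℝ := fun d => t ^ (1/(2 * s d)) with hθdef
  have hθ0 : ∀ d, 0 < θ d := fun d => Real.rpow_pos_of_pos ht0 _
  have hθ1 : ∀ d, θ d < 1 := fun d => Real.rpow_lt_one ht0.le ht1 (by have := hs d; positivity)
  have hθs : ∀ d, θ d ^ (s d) = u := by
    intro d
    rw [hθdef]
    dsimp only
    rw [← Real.rpow_mul ht0.le, hudef]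
    congr 1
    field_simp
    ring_nf
    exact mul_inv_cancel₀ (hs d).ne'
  set K : Fin N → ℝ := fun d => (1 - θ d)⁻¹ ^ (s d) with hKdef
  have hK1 : ∀ d, 1 ≤ K d := fun d =>
    Real.one_le_rpow ((one_le_inv₀ (by linarith [hθ1 d])).2 (by linarith [hθ0 d])) (hs d).le
  have hK0 : ∀ d, 0 < K d := fun d => lt_of_lt_of_le one_pos (hK1 d)
  set E : Fin N → ℝ := fun d => max 1 r⁻¹ * K d ^ (2:ℝ) * max 1 (1 - u)⁻¹ with hEdef
  have hE1 : ∀ d, 1 ≤ E d := by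
    intro d
    have h2 : 1 ≤ K d ^ (2:ℝ) := Real.one_le_rpow (hK1 d) (by norm_num)
    calc (1:ℝ) = 1 * 1 * 1 := by norm_num
      _ ≤ max 1 r⁻¹ * K d ^ (2:ℝ) * max 1 (1 - u)⁻¹ := by
          gcongr
          · exact le_max_left _ _
          · exact le_max_left _ _
  have coord : ∀ d : Fin N, ∀ a : ℝ, 1 ≤ a → ∀ n : ℕ,
      ∑ j ∈ Finset.range n, r ^ (-a) * genBinom a j ^ (s d) * (r ^ j)⁻¹ * ρ ^ j ≤ E d ^ a := by
    intro d a ha n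
    have ha0 : (0:ℝ) ≤ a := by linarith
    have hgb : ∀ j : ℕ, genBinom a j ^ (s d) * ((r ^ j)⁻¹ * ρ ^ j) ≤ K d ^ (a+1) * u ^ j := by
      intro j
      have h1 : genBinom a j ≤ (1 - θ d)⁻¹ ^ (a+1) * ((θ d) ^ j)⁻¹ := by
        have h := genBinom_mul_pow_le ha (hθ0 d).le (hθ1 d) j
        have hpos : (0:ℝ) < θ d ^ j := by positivity
        calc genBinom a j = genBinom a j * θ d ^ j * (θ d ^ j)⁻¹ := by field_simp
          _ ≤ (1 - θ d)⁻¹ ^ (a+1) * (θ d ^ j)⁻¹ :=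
              mul_le_mul_of_nonneg_right h (by positivity)
      have h2 : genBinom a j ^ (s d) ≤ ((1 - θ d)⁻¹ ^ (a+1) * ((θ d) ^ j)⁻¹) ^ (s d) :=
        Real.rpow_le_rpow (genBinom_nonneg ha0 j) h1 (hs d).le
      have hθinv : (0:ℝ) < 1 - θ d := by linarith [hθ1 d]
      have h3 : ((1 - θ d)⁻¹ ^ (a+1) * ((θ d) ^ j)⁻¹) ^ (s d)
          = K d ^ (a+1) * (u⁻¹) ^ j := by
        rw [Real.mul_rpow (by positivity) (by positivity)]
        congr 1
        · rw [← Real.rpow_mul (by positivity), mul_comm (a+1) (s d),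
            Real.rpow_mul (by positivity), hKdef]
        · rw [← inv_pow, ← Real.rpow_natCast ((θ d)⁻¹) j, ← Real.rpow_mul (by positivity),
            mul_comm ((j:ℕ):ℝ) (s d), Real.rpow_mul (by positivity), Real.rpow_natCast,
            Real.inv_rpow (hθ0 d).le, hθs d]
      have h4 : (r ^ j)⁻¹ * ρ ^ j = t ^ j := by
        rw [htdef, div_pow]
        field_simp
      calc genBinom a j ^ (s d) * ((r ^ j)⁻¹ * ρ ^ j)
          = genBinom a j ^ (s d) * t ^ j := by rw [h4]
        _ ≤ (K d ^ (a+1) * (u⁻¹) ^ j) * t ^ j :=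
            mul_le_mul_of_nonneg_right (h2.trans_eq h3) (by positivity)
        _ = K d ^ (a+1) * u ^ j := by
            rw [mul_assoc, ← mul_pow]
            congr 2
            rw [← huu]
            field_simp
    calc ∑ j ∈ Finset.range n, r ^ (-a) * genBinom a j ^ (s d) * (r ^ j)⁻¹ * ρ ^ j
        ≤ ∑ j ∈ Finset.range n, r ^ (-a) * (K d ^ (a+1) * u ^ j) := by
          apply Finset.sum_le_sum
          intro j _
          have hb := hgb j
          have hstep : r ^ (-a) * genBinom a j ^ (s d) * (r ^ j)⁻¹ * ρ ^ j
              = r ^ (-a) * (genBinom a j ^ (s d) * ((r ^ j)⁻¹ * ρ ^ j)) := by ring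
          rw [hstep]
          exact mul_le_mul_of_nonneg_left hb (Real.rpow_pos_of_pos hr _).le
      _ = r ^ (-a) * K d ^ (a+1) * ∑ j ∈ Finset.range n, u ^ j := by
          rw [Finset.mul_sum]
          exact Finset.sum_congr rfl fun j _ => by ring
      _ ≤ r ^ (-a) * K d ^ (a+1) * (1 - u)⁻¹ := by
          apply mul_le_mul_of_nonneg_left _
            (mul_nonneg (Real.rpow_pos_of_pos hr _).le (Real.rpow_pos_of_pos (hK0 d) _).le)
          have h := geom_sum_Ico_le_of_lt_one hu0.le hu1 (m := 0) (n := n)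
          rw [← Finset.range_eq_Ico] at h
          simpa [one_div] using h
      _ ≤ E d ^ a := by
          have h1u : (0:ℝ) < 1 - u := by linarith
          have p2 : (0:ℝ) ≤ K d ^ (a+1) := (Real.rpow_pos_of_pos (hK0 d) _).le
          have pm1 : (0:ℝ) < max 1 r⁻¹ := lt_of_lt_of_le one_pos (le_max_left _ _)
          have pm2 : (0:ℝ) < K d ^ (2:ℝ) := Real.rpow_pos_of_pos (hK0 d) _
          have pm3 : (0:ℝ) < max 1 (1 - u)⁻¹ := lt_of_lt_of_le one_pos (le_max_left _ _)
          have p3 : (0:ℝ) ≤ (max 1 r⁻¹) ^ a := (Real.rpow_pos_of_pos pm1 _).le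
          have p4 : (0:ℝ) ≤ (K d ^ (2:ℝ)) ^ a := (Real.rpow_pos_of_pos pm2 _).le
          have p5 : (0:ℝ) ≤ (1 - u)⁻¹ := by positivity
          have e1 : r ^ (-a) ≤ (max 1 r⁻¹) ^ a := by
            rw [Real.rpow_neg hr.le, ← Real.inv_rpow hr.le]
            exact Real.rpow_le_rpow (by positivity) (le_max_right _ _) ha0
          have e2 : K d ^ (a+1) ≤ (K d ^ (2:ℝ)) ^ a := by
            rw [← Real.rpow_mul (hK0 d).le]
            exact Real.rpow_le_rpow_of_exponent_le (hK1 d) (by linarith)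
          have e3 : (1 - u)⁻¹ ≤ (max 1 (1 - u)⁻¹) ^ a :=
            calc (1 - u)⁻¹ ≤ max 1 (1 - u)⁻¹ := le_max_right _ _
              _ = (max 1 (1 - u)⁻¹) ^ (1:ℝ) := (Real.rpow_one _).symm
              _ ≤ (max 1 (1 - u)⁻¹) ^ a := Real.rpow_le_rpow_of_exponent_le (le_max_left _ _) ha
          calc r ^ (-a) * K d ^ (a+1) * (1 - u)⁻¹
              ≤ (max 1 r⁻¹) ^ a * (K d ^ (2:ℝ)) ^ a * (max 1 (1 - u)⁻¹) ^ a := by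
                apply mul_le_mul (mul_le_mul e1 e2 p2 p3) e3 p5 (mul_nonneg p3 p4)
            _ = E d ^ a := by
                rw [hEdef]
                dsimp only
                rw [Real.mul_rpow (mul_nonneg pm1.le pm2.le) pm3.le,
                  Real.mul_rpow pm1.le pm2.le]

  set A : ℝ := ∏ d, E d with hAdef
  have hA1 : 1 ≤ A := by
    rw [hAdef]
    exact one_le_prod_real _ _ fun d _ => hE1 d
  have hA0 : 0 < A := lt_of_lt_of_le one_pos hA1
  have hEA : ∀ d, E d ≤ A := by
    intro d
    rw [hAdef]
    exact single_le_prod_real _ hE1 d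
  refine ⟨A, hA0, ?_⟩
  intro f hf α hα x hx
  have hxΡ : ∀ d, ‖x d‖ < Ρ d := fun d => (hx d).trans (hρr.trans (hrΡ d))
  have hsum1 : Summable fun J : Fin N → ℕ => ‖f J‖ * ∏ d, ‖x d‖ ^ J d :=
    hf _ (fun d => norm_nonneg _) hxΡ
  have hnorm : ∀ J : Fin N → ℕ,
      ‖f J * ∏ d, x d ^ J d‖ = ‖f J‖ * ∏ d, ‖x d‖ ^ J d := by
    intro J
    rw [norm_mul, norm_prod]
    congr 1
    exact Finset.prod_congr rfl fun d _ => norm_pow _ _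
  have habs : ‖coeffEval f x‖
      ≤ ∑' J : Fin N → ℕ, ‖f J‖ * ∏ d, ‖x d‖ ^ J d := by
    rw [coeffEval]
    refine le_trans (norm_tsum_le_tsum_norm ?_) ?_
    · exact hsum1.congr fun J => (hnorm J).symm
    · exact le_of_eq (tsum_congr hnorm)
  have hsumr : Summable fun J : Fin N → ℕ => ‖f J‖ * r ^ (∑ d, J d) := by
    have h := hf (fun _ => r) (fun _ => hr.le) fun d => hrΡ d
    refine h.congr fun J => ?_
    rw [Finset.prod_pow_eq_pow_sum]
  by_cases hα0 : α = 0
  · subst hα0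
    rw [nagumoNorm, if_pos rfl]
    simp only [Pi.zero_apply, Finset.sum_const_zero, Real.rpow_zero, one_mul]
    refine habs.trans ?_
    apply Summable.tsum_le_tsum _ hsum1 hsumr
    intro J
    rw [← Finset.prod_pow_eq_pow_sum]
    apply mul_le_mul_of_nonneg_left _ (norm_nonneg _)
    apply Finset.prod_le_prod (fun d _ => by positivity) fun d _ =>
      pow_le_pow_left₀ (norm_nonneg _) (le_of_lt ((hx d).trans hρr)) _
  · have hα1 : ∀ d, 1 ≤ α d := hα.resolve_right hα0
    rw [nagumoNorm, if_neg hα0]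
    set C : ℝ := ∑' J : Fin N → ℕ, ‖f J‖ * r ^ (∑ d, J d) with hCdef
    have hC0 : 0 ≤ C := tsum_nonneg fun J => by positivity
    have hCJ : ∀ J : Fin N → ℕ, ‖f J‖ * r ^ (∑ d, J d) ≤ C :=
      fun J => Summable.le_tsum hsumr J fun J' _ => by positivity
    have hprod_split : ∀ J : Fin N → ℕ,
        (∏ d, r ^ (-(α d)) * genBinom (α d) (J d) ^ s d * (r ^ J d)⁻¹)
        = r ^ (-(∑ d, α d)) * (∏ d, genBinom (α d) (J d) ^ s d) * (r ^ (∑ d, J d))⁻¹ := by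
      intro J
      rw [Finset.prod_mul_distrib, Finset.prod_mul_distrib]
      congr 1
      · congr 1
        rw [← rpow_sum_eq hr]
        congr 1
        rw [← Finset.sum_neg_distrib]
      · rw [Finset.prod_inv_distrib, Finset.prod_pow_eq_pow_sum]
    have hG1 : ∀ J : Fin N → ℕ, 1 ≤ ∏ d, genBinom (α d) (J d) ^ s d :=
      fun J => one_le_prod_real _ _ fun d _ =>
        Real.one_le_rpow (one_le_genBinom (hα1 d) _) (hs d).le
    have hSne : (nagumoSet f α r s).Nonempty := by
      refine ⟨C * r ^ (∑ d, α d), ⟨by positivity, ?_⟩⟩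
      intro J
      rw [hprod_split J]
      have hrJ : (0:ℝ) < r ^ (∑ d, J d) := by positivity
      have hcancel : r ^ (∑ d, α d) * r ^ (-(∑ d, α d)) = 1 := by
        rw [← Real.rpow_add hr]
        simp
      have hstep1 : ‖f J‖ ≤ C * (r ^ (∑ d, J d))⁻¹ := by
        rw [← div_eq_mul_inv, le_div_iff₀ hrJ]
        exact hCJ J
      have hstep2 : C * (r ^ (∑ d, J d))⁻¹
          ≤ C * (∏ d, genBinom (α d) (J d) ^ s d) * (r ^ (∑ d, J d))⁻¹ := by
        apply mul_le_mul_of_nonneg_right _ (by positivity)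
        calc C = C * 1 := (mul_one _).symm
          _ ≤ C * ∏ d, genBinom (α d) (J d) ^ s d :=
            mul_le_mul_of_nonneg_left (hG1 J) hC0
      have hstep3 : C * (∏ d, genBinom (α d) (J d) ^ s d) * (r ^ (∑ d, J d))⁻¹
          = C * r ^ (∑ d, α d)
            * (r ^ (-(∑ d, α d)) * (∏ d, genBinom (α d) (J d) ^ s d)
              * (r ^ (∑ d, J d))⁻¹) := by
        have : C * r ^ (∑ d, α d)
            * (r ^ (-(∑ d, α d)) * (∏ d, genBinom (α d) (J d) ^ s d)
              * (r ^ (∑ d, J d))⁻¹)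
            = (r ^ (∑ d, α d) * r ^ (-(∑ d, α d)))
              * (C * (∏ d, genBinom (α d) (J d) ^ s d) * (r ^ (∑ d, J d))⁻¹) := by ring
        rw [this, hcancel, one_mul]
      exact hstep1.trans (hstep2.trans_eq hstep3)
    have hSbdd : BddBelow (nagumoSet f α r s) := ⟨0, fun B hB => hB.1⟩
    have hApow : 0 < A ^ (∑ d, α d) := Real.rpow_pos_of_pos hA0 _
    have key : ∀ B ∈ nagumoSet f α r s,
        ‖coeffEval f x‖ ≤ A ^ (∑ d, α d) * B := by
      intro B hB
      obtain ⟨hB0, hBJ⟩ := hB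
      refine habs.trans ?_
      apply Summable.tsum_le_of_sum_le hsum1
      intro F
      set n : ℕ := (F.sup fun J => Finset.univ.sup J) + 1 with hndef
      have hFn : ∀ J ∈ F, ∀ d, J d < n := by
        intro J hJ d
        have h1 : J d ≤ Finset.univ.sup J := Finset.le_sup (Finset.mem_univ d)
        have h2 : Finset.univ.sup J ≤ F.sup fun J => Finset.univ.sup J := Finset.le_sup hJ
        omega
      set g : Fin N → ℕ → ℝ :=
        fun d j => r ^ (-(α d)) * genBinom (α d) j ^ s d * (r ^ j)⁻¹ * ρ ^ j with hgdef
      have hg0 : ∀ d j, 0 ≤ g d j := by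
        intro d j
        simp only [hgdef]
        have h1 : (0:ℝ) ≤ genBinom (α d) j := genBinom_nonneg (by linarith [hα1 d]) j
        have h2 : (0:ℝ) ≤ r ^ (-(α d)) := (Real.rpow_pos_of_pos hr _).le
        have h3 : (0:ℝ) ≤ genBinom (α d) j ^ s d := Real.rpow_nonneg h1 _
        positivity
      calc ∑ J ∈ F, ‖f J‖ * ∏ d, ‖x d‖ ^ J d
          ≤ ∑ J ∈ F, B * ∏ d, g d (J d) := by
            apply Finset.sum_le_sum
            intro J _
            have h1 := hBJ J
            have h2 : (∏ d, ‖x d‖ ^ J d) ≤ ∏ d, ρ ^ J d :=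
              Finset.prod_le_prod (fun d _ => by positivity)
                fun d _ => pow_le_pow_left₀ (norm_nonneg _) (hx d).le _
            have hBprod : (0:ℝ) ≤ B * ∏ d, r ^ (-(α d)) * genBinom (α d) (J d) ^ s d
                * (r ^ J d)⁻¹ := by
              apply mul_nonneg hB0 (Finset.prod_nonneg fun d _ => ?_)
              have h3 : (0:ℝ) ≤ genBinom (α d) (J d) := genBinom_nonneg (by linarith [hα1 d]) _
              have h4 : (0:ℝ) ≤ r ^ (-(α d)) := (Real.rpow_pos_of_pos hr _).le
              have h5 : (0:ℝ) ≤ genBinom (α d) (J d) ^ s d := Real.rpow_nonneg h3 _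
              positivity
            calc ‖f J‖ * ∏ d, ‖x d‖ ^ J d
                ≤ (B * ∏ d, r ^ (-(α d)) * genBinom (α d) (J d) ^ s d * (r ^ J d)⁻¹)
                  * ∏ d, ρ ^ J d :=
                  mul_le_mul h1 h2 (Finset.prod_nonneg fun d _ => by positivity) hBprod
              _ = B * ∏ d, g d (J d) := by
                  rw [mul_assoc, ← Finset.prod_mul_distrib]
        _ ≤ ∑ J ∈ Fintype.piFinset (fun _ : Fin N => Finset.range n), B * ∏ d, g d (J d) := by
            apply Finset.sum_le_sum_of_subset_of_nonneg
            · intro J hJ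
              rw [Fintype.mem_piFinset]
              intro d
              rw [Finset.mem_range]
              exact hFn J hJ d
            · intro J _ _
              exact mul_nonneg hB0 (Finset.prod_nonneg fun d _ => hg0 d (J d))
        _ = B * ∏ d, ∑ j ∈ Finset.range n, g d j := by
            rw [← Finset.mul_sum, Finset.prod_univ_sum]
        _ ≤ B * ∏ d, A ^ α d := by
            apply mul_le_mul_of_nonneg_left _ hB0
            apply Finset.prod_le_prod (fun d _ => Finset.sum_nonneg fun j _ => hg0 d j)
            intro d _
            calc ∑ j ∈ Finset.range n, g d j ≤ E d ^ α d := coord d (α d) (hα1 d) n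
              _ ≤ A ^ α d :=
                Real.rpow_le_rpow (by linarith [hE1 d]) (hEA d) (by linarith [hα1 d])
        _ = A ^ (∑ d, α d) * B := by rw [rpow_sum_eq hA0, mul_comm]
    have hlb : ‖coeffEval f x‖ / A ^ (∑ d, α d) ≤ sInf (nagumoSet f α r s) := by
      apply le_csInf hSne
      intro B hB
      rw [div_le_iff₀ hApow, mul_comm]
      exact key B hB
    rw [mul_comm]
    exact (div_le_iff₀ hApow).1 hlb
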